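/- Let c > 0 and let u ∈ C²(𝒟) satisfy Δu(x) ≥ c e^{2u(x)} for all x ∈ 𝒟 (i.e. the conformal metric e^{2u}δ_{ij} has Gauss curvature K[u] ≤ −c). Then u(x) ≤ log(2/(√c (1 − |x|²))) for all x ∈ 𝒟; that is, the metric is dominated by the complete metric of constant curvature −c on the unit disk. -/

import Mathlib

open Real MeasureTheory Metric Set Filter Topology ENNReal

/-- The plane `ℝ²`. -/
abbrev Plane := EuclideanSpace ℝ (Fin 2)

/-- The Euclidean Laplacian `Δu = ∑ᵢ ∂²u/∂xᵢ²` on `ℝ²`. -/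
noncomputable def laplacian (u : Plane → ℝ) (x : Plane) : ℝ :=
  ∑ i : Fin 2, iteratedFDeriv ℝ 2 u x (fun _ => EuclideanSpace.single i 1)

/-- Second directional derivative of a C² function on an open set, via 1D restriction. -/
lemma second_dir (f : Plane → ℝ) (s : Set Plane) (hs : IsOpen s)
    (hf : ContDiffOn ℝ 2 f s) (x : Plane) (hx : x ∈ s) (v : Plane) :
    (∀ᶠ t in 𝓝 (0:ℝ), DifferentiableAt ℝ (fun t : ℝ => f (x + t • v)) t) ∧
    DifferentiableAt ℝ (deriv (fun t : ℝ => f (x + t • v))) 0 ∧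
    iteratedFDeriv ℝ 2 f x (fun _ => v) =
      deriv (deriv (fun t : ℝ => f (x + t • v))) 0 := by
  set F := fderiv ℝ f with hF
  have hF1 : ContDiffOn ℝ 1 F s := hf.fderiv_of_isOpen hs le_rfl
  have hline : ∀ t : ℝ, HasDerivAt (fun t : ℝ => x + t • v) v t := by
    intro t
    simpa using ((hasDerivAt_id t).smul_const v).const_add x
  have hmem : ∀ᶠ t in 𝓝 (0:ℝ), x + t • v ∈ s := by
    have hcont : Continuous (fun t : ℝ => x + t • v) := by continuity
    have : Tendsto (fun t : ℝ => x + t • v) (𝓝 0) (𝓝 x) := by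
      simpa using hcont.tendsto 0
    exact this (hs.mem_nhds hx)
  have hfd : ∀ᶠ t in 𝓝 (0:ℝ), HasDerivAt (fun t : ℝ => f (x + t • v)) (F (x + t • v) v) t := by
    filter_upwards [hmem] with t ht
    have hdf : DifferentiableAt ℝ f (x + t • v) :=
      (hf.differentiableOn (by norm_num)).differentiableAt (hs.mem_nhds ht)
    exact (hdf.hasFDerivAt.comp_hasDerivAt t (hline t))
  have hderiv_eq : deriv (fun t : ℝ => f (x + t • v)) =ᶠ[𝓝 (0:ℝ)]
      (fun t : ℝ => F (x + t • v) v) := by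
    filter_upwards [hfd] with t ht using ht.deriv
  have hFd : DifferentiableAt ℝ F x :=
    (hF1.differentiableOn (by norm_num)).differentiableAt (hs.mem_nhds hx)
  have hcomp : HasDerivAt (fun t : ℝ => F (x + t • v) v) ((fderiv ℝ F x v) v) 0 := by
    have hx0 : x + (0:ℝ) • v = x := by simp
    have h1 : HasDerivAt (fun t : ℝ => F (x + t • v)) (fderiv ℝ F x v) 0 := by
      have := (hx0 ▸ hFd.hasFDerivAt).comp_hasDerivAt 0 (hline 0)
      simpa [Function.comp_def] using this
    have := h1.clm_apply (hasDerivAt_const (0:ℝ) v)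
    simpa [hx0] using this
  refine ⟨?_, ?_, ?_⟩
  · filter_upwards [hfd] with t ht using ht.differentiableAt
  · exact hderiv_eq.differentiableAt_iff.2 hcomp.differentiableAt
  · rw [iteratedFDeriv_two_apply, hderiv_eq.deriv_eq, hcomp.deriv]

lemma second_deriv_nonpos_of_isLocalMax {g : ℝ → ℝ}
    (h1 : ∀ᶠ t in 𝓝 (0:ℝ), DifferentiableAt ℝ g t)
    (h2 : DifferentiableAt ℝ (deriv g) 0) (hmax : IsLocalMax g 0) :
    deriv (deriv g) 0 ≤ 0 := by
  by_contra hK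
  push_neg at hK
  have hg'0 : deriv g 0 = 0 := hmax.deriv_eq_zero
  have hslope : Tendsto (slope (deriv g) 0) (𝓝[≠] 0) (𝓝 (deriv (deriv g) 0)) :=
    hasDerivAt_iff_tendsto_slope.1 h2.hasDerivAt
  have hpos : ∀ᶠ t in 𝓝[>] (0:ℝ), 0 < deriv g t := by
    have h' : ∀ᶠ t in 𝓝[≠] (0:ℝ), 0 < slope (deriv g) 0 t :=
      hslope.eventually (eventually_gt_nhds hK)
    have h'' : ∀ᶠ t in 𝓝[>] (0:ℝ), 0 < slope (deriv g) 0 t :=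
      h'.filter_mono (nhdsWithin_mono _ fun t ht => ne_of_gt ht)
    rw [eventually_nhdsWithin_iff] at h'' ⊢
    filter_upwards [h''] with t ht htpos
    have hs := ht htpos
    rw [slope_def_field, hg'0] at hs
    have htpos' : (0:ℝ) < t := htpos
    rw [sub_zero, sub_zero] at hs
    have := mul_pos hs htpos'
    rwa [div_mul_cancel₀ _ (ne_of_gt htpos')] at this
  obtain ⟨δ₁, hδ₁, hd⟩ := Metric.eventually_nhds_iff.1 h1
  obtain ⟨δ₃, hδ₃, hm⟩ := Metric.eventually_nhds_iff.1 hmax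
  rw [eventually_nhdsWithin_iff] at hpos
  obtain ⟨δ₂, hδ₂, hp⟩ := Metric.eventually_nhds_iff.1 hpos
  set δ := min δ₁ (min δ₂ δ₃) / 2 with hδdef
  have hδpos : 0 < δ := by positivity
  have hδ1 : δ < δ₁ := by
    have : min δ₁ (min δ₂ δ₃) ≤ δ₁ := min_le_left _ _
    simp only [hδdef]; linarith
  have hδ2 : δ < δ₂ := by
    have : min δ₁ (min δ₂ δ₃) ≤ δ₂ := le_trans (min_le_right _ _) (min_le_left _ _)
    simp only [hδdef]; linarith
  have hδ3 : δ < δ₃ := by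
    have : min δ₁ (min δ₂ δ₃) ≤ δ₃ := le_trans (min_le_right _ _) (min_le_right _ _)
    simp only [hδdef]; linarith
  have hmono : StrictMonoOn g (Icc 0 δ) := by
    apply strictMonoOn_of_deriv_pos (convex_Icc 0 δ)
    · intro t ht
      have : dist t 0 < δ₁ := by
        rw [Real.dist_eq, sub_zero, abs_of_nonneg ht.1]; linarith [ht.2]
      exact ((hd this).continuousAt).continuousWithinAt
    · intro t ht
      rw [interior_Icc] at ht
      have hdist : dist t 0 < δ₂ := by
        rw [Real.dist_eq, sub_zero, abs_of_pos ht.1]; linarith [ht.2]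
      exact hp hdist ht.1
  have h01 : g 0 < g δ :=
    hmono (by constructor <;> [rfl; positivity]) ⟨le_of_lt hδpos, le_refl δ⟩ hδpos
  have : g δ ≤ g 0 := hm (by rw [Real.dist_eq, sub_zero, abs_of_pos hδpos]; linarith)
  linarith

lemma plane_norm_sq (y : Plane) : ‖y‖^2 = ∑ i : Fin 2, (y i)^2 := by
  rw [EuclideanSpace.norm_eq, Real.sq_sqrt (by positivity)]
  simp [sq_abs]

lemma norm_line (y : Plane) (i : Fin 2) (t : ℝ) :
    ‖y + t • EuclideanSpace.single i (1:ℝ)‖^2 = ‖y‖^2 + 2*(y i)*t + t^2 := by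
  rw [norm_add_sq_real, real_inner_smul_right, norm_smul]
  have h1 : (inner ℝ y (EuclideanSpace.single i (1:ℝ)) : ℝ) = y i := by
    rw [EuclideanSpace.inner_single_right]; simp
  rw [h1, EuclideanSpace.norm_single]
  simp [mul_pow, sq_abs]; ring

lemma vr_contDiffOn (r A : ℝ) (hr : 0 < r) :
    ContDiffOn ℝ 2 (fun x : Plane => A - Real.log (r^2 - ‖x‖^2)) (ball 0 r) := by
  apply ContDiffOn.sub contDiffOn_const
  apply ContDiffOn.log
  · exact (contDiff_const.sub (contDiff_norm_sq ℝ)).contDiffOn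
  · intro x hx
    have hx' : ‖x‖ < r := by simpa using hx
    have : ‖x‖^2 < r^2 := by nlinarith [norm_nonneg x]
    linarith

lemma vr_second (r A : ℝ) (y : Plane) (hy : ‖y‖ < r) (i : Fin 2) :
    deriv (deriv (fun t : ℝ =>
        A - Real.log (r^2 - ‖y + t • EuclideanSpace.single i (1:ℝ)‖^2))) 0
    = (2*(r^2 - ‖y‖^2) + 4*(y i)^2) / (r^2 - ‖y‖^2)^2 := by
  set B := r^2 - ‖y‖^2 with hB
  set a := y i with ha
  have hBpos : 0 < B := by
    have : ‖y‖^2 < r^2 := by nlinarith [norm_nonneg y, norm_nonneg y]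
    simp [hB]; linarith
  set q : ℝ → ℝ := fun t => B - 2*a*t - t^2 with hq
  have hfun : (fun t : ℝ =>
      A - Real.log (r^2 - ‖y + t • EuclideanSpace.single i (1:ℝ)‖^2)) =
      fun t => A - Real.log (q t) := by
    funext t; rw [norm_line]; congr 2; simp only [hq, hB, ha]; ring
  rw [hfun]
  have hqder : ∀ t : ℝ, HasDerivAt q (-(2*a) - 2*t) t := by
    intro t
    have h1 : HasDerivAt (fun t : ℝ => B - 2*a*t - t^2) (0 - 2*a - 2*t) t := by
      have := ((hasDerivAt_const t B).sub ((hasDerivAt_id t).const_mul (2*a))).sub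
        (hasDerivAt_pow 2 t)
      exact this.congr_deriv (by norm_num)
    simpa using h1
  have hqcont : Continuous q := by fun_prop
  have hqpos : ∀ᶠ t in 𝓝 (0:ℝ), 0 < q t := by
    exact (continuousAt_const (y := (0:ℝ))).eventually_lt hqcont.continuousAt
      (by simp [hq]; exact hBpos)
  have hderiv_eq : deriv (fun t => A - Real.log (q t)) =ᶠ[𝓝 (0:ℝ)]
      fun t => (2*a + 2*t) / q t := by
    filter_upwards [hqpos] with t ht
    have h : HasDerivAt (fun t => A - Real.log (q t)) (-((-(2*a) - 2*t) / q t)) t :=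
      ((hqder t).log (ne_of_gt ht)).const_sub A
    rw [h.deriv]; field_simp; ring
  rw [hderiv_eq.deriv_eq]
  have hq0 : q 0 = B := by simp [hq]
  have hdiv : HasDerivAt (fun t : ℝ => (2*a + 2*t) / q t)
      ((2 * q 0 - (2*a + 2*0) * (-(2*a) - 2*0)) / (q 0)^2) 0 := by
    apply HasDerivAt.div _ (hqder 0) (by rw [hq0]; exact ne_of_gt hBpos)
    have := ((hasDerivAt_id (0:ℝ)).const_mul 2).const_add (2*a)
    simpa using this
  rw [hdiv.deriv, hq0]
  ring

/-- Key comparison on a disk of radius `r < 1`. -/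
lemma key_comparison (c : ℝ) (hc : 0 < c) (u : Plane → ℝ)
    (hu : ContDiffOn ℝ 2 u (ball 0 1))
    (hΔ : ∀ x ∈ ball (0 : Plane) 1, c * Real.exp (2 * u x) ≤ laplacian u x)
    (x₀ : Plane) (r : ℝ) (hr0 : ‖x₀‖ < r) (hr1 : r < 1) :
    u x₀ ≤ Real.log (2*r/Real.sqrt c) - Real.log (r^2 - ‖x₀‖^2) := by
  have hrpos : 0 < r := lt_of_le_of_lt (norm_nonneg x₀) hr0
  set A := Real.log (2*r/Real.sqrt c) with hA
  set V : Plane → ℝ := fun x => A - Real.log (r^2 - ‖x‖^2) with hV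
  by_contra hcon
  push_neg at hcon
  have hcon' : V x₀ < u x₀ := hcon
  have hVC2 : ContDiffOn ℝ 2 V (ball 0 r) := vr_contDiffOn r A hrpos
  have hsub1 : closedBall (0:Plane) r ⊆ ball 0 1 := closedBall_subset_ball hr1
  -- bound for u on closedBall 0 r
  obtain ⟨zM, hzM, hzmax⟩ := (isCompact_closedBall (0:Plane) r).exists_isMaxOn
    ⟨0, by simp [hrpos.le]⟩ (hu.continuousOn.mono hsub1)
  set M := u zM with hM
  have hMbound : ∀ x ∈ closedBall (0:Plane) r, u x ≤ M := hzmax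
  -- choose the radius s
  have hx0sq : ‖x₀‖^2 < r^2 := by nlinarith [norm_nonneg x₀]
  set ε := min (Real.exp (A - M)) ((r^2 - ‖x₀‖^2)/2) with hε
  have hεpos : 0 < ε := lt_min (Real.exp_pos _) (by linarith)
  have hεle : ε ≤ (r^2 - ‖x₀‖^2)/2 := min_le_right _ _
  have hεle' : ε ≤ Real.exp (A - M) := min_le_left _ _
  set s := Real.sqrt (r^2 - ε) with hs
  have hr2ε : 0 < r^2 - ε := by nlinarith [sq_nonneg ‖x₀‖]
  have hs2 : s^2 = r^2 - ε := Real.sq_sqrt hr2ε.le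
  have hsnn : 0 ≤ s := Real.sqrt_nonneg _
  have hx0s : ‖x₀‖ < s := by
    have : ‖x₀‖^2 < s^2 := by rw [hs2]; linarith
    exact lt_of_pow_lt_pow_left₀ 2 hsnn this
  have hsr : s < r := by
    have : s^2 < r^2 := by rw [hs2]; linarith
    exact lt_of_pow_lt_pow_left₀ 2 hrpos.le this
  -- on the sphere of radius `s`, `u ≤ V`
  have hbdry : ∀ x : Plane, ‖x‖ = s → u x - V x ≤ 0 := by
    intro x hxs
    have hxr : x ∈ closedBall (0:Plane) r := by
      simp [mem_closedBall, dist_zero_right, hxs]; linarith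
    have h1 : u x ≤ M := hMbound x hxr
    have h2 : r^2 - ‖x‖^2 = ε := by rw [hxs, hs2]; ring
    have h3 : Real.log (r^2 - ‖x‖^2) ≤ A - M := by
      rw [h2]
      calc Real.log ε ≤ Real.log (Real.exp (A - M)) :=
            Real.log_le_log hεpos hεle'
        _ = A - M := Real.log_exp _
    have : M ≤ V x := by simp only [hV]; linarith
    linarith
  -- maximum of u - V on closedBall 0 s
  have hsball : closedBall (0:Plane) s ⊆ ball 0 r := closedBall_subset_ball hsr
  have hwcont : ContinuousOn (fun x => u x - V x) (closedBall (0:Plane) s) :=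
    (hu.continuousOn.mono (hsball.trans (ball_subset_ball hr1.le))).sub
      (hVC2.continuousOn.mono hsball)
  obtain ⟨y, hyK, hymax⟩ := (isCompact_closedBall (0:Plane) s).exists_isMaxOn
    ⟨x₀, by simp [mem_closedBall, dist_zero_right]; linarith⟩ hwcont
  have hwy : 0 < u y - V y := by
    have h : u x₀ - V x₀ ≤ u y - V y := hymax (by
      simp [mem_closedBall, dist_zero_right]; linarith :
      x₀ ∈ closedBall (0:Plane) s)
    linarith
  have hys : ‖y‖ < s := by
    rcases lt_or_eq_of_le (by simpa [mem_closedBall, dist_zero_right] using hyK :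
      ‖y‖ ≤ s) with h | h
    · exact h
    · exact absurd (hbdry y h) (by linarith)
  have hyr : y ∈ ball (0:Plane) r := by
    simp [mem_ball, dist_zero_right]; linarith
  have hy1 : y ∈ ball (0:Plane) 1 := ball_subset_ball hr1.le hyr
  have hynorm : ‖y‖ < r := by simpa [mem_ball, dist_zero_right] using hyr
  -- y is a local max of u - V
  have hlocmax : IsLocalMax (fun x => u x - V x) y := by
    apply hymax.isLocalMax
    exact closedBall_mem_nhds_of_mem (by simpa [mem_ball, dist_zero_right] using hys)
  set B := r^2 - ‖y‖^2 with hB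
  have hBpos : 0 < B := by
    have : ‖y‖^2 < r^2 := by nlinarith [norm_nonneg y]
    simp only [hB]; linarith
  -- per-direction second derivative inequality
  have key_i : ∀ i : Fin 2,
      iteratedFDeriv ℝ 2 u y (fun _ => EuclideanSpace.single i (1:ℝ)) ≤
        (2*B + 4*(y i)^2) / B^2 := by
    intro i
    set e : Plane := EuclideanSpace.single i (1:ℝ) with he
    obtain ⟨hUe, hUd, hUeq⟩ := second_dir u (ball 0 1) isOpen_ball hu y hy1 e
    obtain ⟨hVe, hVd, hVeq⟩ := second_dir V (ball 0 r) isOpen_ball hVC2 y hyr e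
    set g : ℝ → ℝ := fun t => u (y + t • e) - V (y + t • e) with hg
    have hgderiv : deriv g =ᶠ[𝓝 (0:ℝ)]
        fun t : ℝ => deriv (fun t : ℝ => u (y + t • e)) t - deriv (fun t : ℝ => V (y + t • e)) t := by
      filter_upwards [hUe, hVe] with t htU htV
      exact deriv_sub htU htV
    have hge : ∀ᶠ t in 𝓝 (0:ℝ), DifferentiableAt ℝ g t := by
      filter_upwards [hUe, hVe] with t htU htV using htU.sub htV
    have hgd : DifferentiableAt ℝ (deriv g) 0 :=
      hgderiv.differentiableAt_iff.2 (hUd.sub hVd)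
    have hglm : IsLocalMax g 0 := by
      have hcont : Tendsto (fun t : ℝ => y + t • e) (𝓝 0) (𝓝 y) := by
        have hc : Continuous (fun t : ℝ => y + t • e) :=
          continuous_const.add (continuous_id.smul continuous_const)
        simpa using hc.tendsto 0
      have hev := hcont.eventually hlocmax
      have hy0 : y + (0:ℝ) • e = y := by rw [zero_smul, add_zero]
      filter_upwards [hev] with t ht
      show g t ≤ g 0
      simp only [hg, hy0]
      exact ht
    have hnonpos := second_deriv_nonpos_of_isLocalMax hge hgd hglm
    have hsplit : deriv (deriv g) 0 =
        deriv (deriv (fun t : ℝ => u (y + t • e))) 0 -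
        deriv (deriv (fun t : ℝ => V (y + t • e))) 0 := by
      rw [hgderiv.deriv_eq]
      exact deriv_sub hUd hVd
    have hVval : deriv (deriv (fun t : ℝ => V (y + t • e))) 0 =
        (2*B + 4*(y i)^2) / B^2 := by
      simp only [hV, he, hB]
      exact vr_second r A y hynorm i
    rw [hUeq]
    rw [hsplit, hVval] at hnonpos
    linarith
  -- sum the inequalities
  have hlap : laplacian u y ≤ 4 * r^2 / B^2 := by
    have h1 : laplacian u y ≤ ∑ i : Fin 2, (2*B + 4*(y i)^2) / B^2 :=
      Finset.sum_le_sum fun i _ => key_i i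
    have h2 : ∑ i : Fin 2, (2*B + 4*(y i)^2) / B^2 = 4 * r^2 / B^2 := by
      rw [← Finset.sum_div]
      congr 1
      rw [Finset.sum_add_distrib, Finset.sum_const]
      have : ∑ i : Fin 2, 4*(y i)^2 = 4 * ‖y‖^2 := by
        rw [plane_norm_sq, Finset.mul_sum]
      rw [this]
      simp only [Finset.card_univ, Fintype.card_fin, nsmul_eq_mul, hB]
      ring
    linarith [h1, h2.le]
  -- contradiction via the PDE
  have hlow : c * Real.exp (2 * u y) ≤ 4 * r^2 / B^2 := le_trans (hΔ y hy1) hlap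
  have hVexp : c * Real.exp (2 * V y) = 4 * r^2 / B^2 := by
    have hcs : (0:ℝ) < Real.sqrt c := Real.sqrt_pos.2 hc
    have harg : (0:ℝ) < 2*r/Real.sqrt c := by positivity
    have h1 : Real.exp (V y) = (2*r/Real.sqrt c) / B := by
      simp only [hV, hA]
      rw [Real.exp_sub, Real.exp_log harg, Real.exp_log (by simpa [hB] using hBpos)]
    have h2 : Real.exp (2 * V y) = ((2*r/Real.sqrt c) / B)^2 := by
      rw [two_mul, Real.exp_add, h1]; ring
    have hsq : Real.sqrt c ^ 2 = c := Real.sq_sqrt hc.le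
    have hBne : B ≠ 0 := ne_of_gt hBpos
    rw [h2, div_pow, div_pow, hsq]
    field_simp
    ring
  have hfinal : u y ≤ V y := by
    have h3 : c * Real.exp (2 * u y) ≤ c * Real.exp (2 * V y) := by
      rw [hVexp]; exact hlow
    have h4 : Real.exp (2 * u y) ≤ Real.exp (2 * V y) :=
      le_of_mul_le_mul_left h3 hc
    have := Real.exp_le_exp.1 h4
    linarith
  linarith

/-- Yau–Schwarz lemma on the disk: if `u ∈ C²(𝒟)` satisfies `Δu ≥ c e^{2u}`
(i.e. `K[u] ≤ -c`), then the conformal metric `e^{2u}δ` is dominated by the complete metric of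
constant curvature `-c` on the unit disk: `u(x) ≤ log(2/(√c (1-|x|²)))`. -/
theorem conformal_factor_upper_bound (c : ℝ) (hc : 0 < c) (u : Plane → ℝ)
    (hu : ContDiffOn ℝ 2 u (ball 0 1))
    (hΔ : ∀ x ∈ ball (0 : Plane) 1, c * exp (2 * u x) ≤ laplacian u x) :
    ∀ x ∈ ball (0 : Plane) 1,
      u x ≤ Real.log (2 / (Real.sqrt c * (1 - ‖x‖ ^ 2))) := by
  intro x hx
  have hxn : ‖x‖ < 1 := by simpa [mem_ball, dist_zero_right] using hx
  set φ : ℝ → ℝ := fun r => Real.log (2*r/Real.sqrt c) - Real.log (r^2 - ‖x‖^2) with hφ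
  have hcs : (0:ℝ) < Real.sqrt c := Real.sqrt_pos.2 hc
  have h1x : 0 < 1 - ‖x‖^2 := by nlinarith [norm_nonneg x]
  have hub : ∀ᶠ r in 𝓝[<] (1:ℝ), u x ≤ φ r := by
    have hIoo : Ioo ‖x‖ 1 ∈ 𝓝[<] (1:ℝ) :=
      Ioo_mem_nhdsLT_of_mem ⟨hxn, le_refl 1⟩
    filter_upwards [hIoo] with r hr
    exact key_comparison c hc u hu hΔ x r hr.1 hr.2
  have hcont : Tendsto φ (𝓝[<] (1:ℝ)) (𝓝 (φ 1)) := by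
    have hc1 : ContinuousAt φ 1 := by
      apply ContinuousAt.sub
      · apply ContinuousAt.log _ (by positivity)
        fun_prop
      · apply ContinuousAt.log _ (by simp; nlinarith)
        fun_prop
    exact hc1.continuousWithinAt.tendsto
  have hle : u x ≤ φ 1 := ge_of_tendsto hcont hub
  have hval : φ 1 = Real.log (2 / (Real.sqrt c * (1 - ‖x‖ ^ 2))) := by
    simp only [hφ]
    norm_num
    rw [Real.log_div (by norm_num) (ne_of_gt hcs),
        Real.log_div (by norm_num) (ne_of_gt (mul_pos hcs h1x)),
        Real.log_mul (ne_of_gt hcs) (ne_of_gt h1x)]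
    ring
  rwa [hval] at hle
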